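/- Let λ, λ̃ be nonzero complex numbers with λ̃ ≠ λ and λ λ̃ ≠ 1, and let A₁, A₂, B₁, B₂ ∈ ℂ. Define τ : ℝ × ℤ → ℂ by τ(t, j) = A₂ B₁ + ((λ λ̃ − 1)/(λ̃ − λ)) (A₁ B₁ λ^j e^{(λ − λ^{-1}) t} − A₂ B₂ λ̃^j e^{(λ̃ − λ̃^{-1}) t}) − A₁ B₂ (λ λ̃)^j e^{(λ − λ^{-1} + λ̃ − λ̃^{-1}) t}, and assume τ(t, j) ≠ 0 for all (t, j) ∈ ℝ × ℤ. Then V := τ_{(−1)} τ_{(2)} / (τ τ_{(1)}) satisfies the scalar Volterra lattice equation V_t = V V_{(1)} − V_{(−1)} V (this is the 2-soliton solution). -/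

import Mathlib

set_option maxHeartbeats 2000000 in
lemma polybil (lam lamt A₁ A₂ B₁ B₂ E1 E2 x y : ℂ) (S H : ℕ → ℂ)
    (hS : ∀ i, S i = lam * lamt * (lamt - lam) * (A₂ * B₁)
        + lam * lamt * (lam * lamt - 1) * ((A₁ * B₁) * x * lam ^ i * E1 - (A₂ * B₂) * y * lamt ^ i * E2)
        - lam * lamt * (lamt - lam) * (A₁ * B₂) * (x * y) * (lam * lamt) ^ i * (E1 * E2))
    (hH : ∀ i, H i = (lam * lamt - 1) * ((lam ^ 2 - 1) * lamt * ((A₁ * B₁) * x * lam ^ i) * E1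
            - (lamt ^ 2 - 1) * lam * ((A₂ * B₂) * y * lamt ^ i) * E2)
        - (lamt - lam) * ((lam ^ 2 - 1) * lamt + (lamt ^ 2 - 1) * lam) * ((A₁ * B₂) * x * y * (lam * lamt) ^ i) * (E1 * E2)) :
    H 1 * S 2 - S 1 * H 2 = -(S 0 * S 3) + S 1 * S 2 := by
  simp only [hS, hH]
  ring



set_option maxHeartbeats 4000000 in
/-- the 2-soliton tau function of the Volterra lattice. With
`τ(t,j) = A₂B₁ + ((λλ̃−1)/(λ̃−λ))(A₁B₁ λ^j e^{(λ−λ⁻¹)t} − A₂B₂ λ̃^j e^{(λ̃−λ̃⁻¹)t})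
          − A₁B₂ (λλ̃)^j e^{(λ−λ⁻¹+λ̃−λ̃⁻¹)t}`
nowhere vanishing, `V := τ_{(−1)} τ_{(2)} / (τ τ_{(1)})` satisfies the scalar Volterra lattice
equation `V_t = V V_{(1)} − V_{(−1)} V`. -/
theorem stmt_15 (lam lamt : ℂ) (hlam : lam ≠ 0) (hlamt : lamt ≠ 0)
    (hne : lamt ≠ lam) (hne1 : lam * lamt ≠ 1)
    (A₁ A₂ B₁ B₂ : ℂ)
    (τ : ℝ → ℤ → ℂ)
    (hτ : ∀ t j, τ t j
      = A₂ * B₁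
        + ((lam * lamt - 1) / (lamt - lam))
          * (A₁ * B₁ * lam ^ j * Complex.exp ((lam - lam⁻¹) * t)
            - A₂ * B₂ * lamt ^ j * Complex.exp ((lamt - lamt⁻¹) * t))
        - A₁ * B₂ * (lam * lamt) ^ j
          * Complex.exp ((lam - lam⁻¹ + lamt - lamt⁻¹) * t))
    (hτne : ∀ t j, τ t j ≠ 0)
    (V : ℝ → ℤ → ℂ)
    (hV : ∀ t j, V t j = τ t (j - 1) * τ t (j + 2) / (τ t j * τ t (j + 1))) :
    ∀ t j, HasDerivAt (fun s => V s j) (V t j * V t (j + 1) - V t (j - 1) * V t j) t := by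
  intro t j
  have hlt : lamt - lam ≠ 0 := sub_ne_zero.mpr hne
  have hc : lam * lamt * (lamt - lam) ≠ 0 := mul_ne_zero (mul_ne_zero hlam hlamt) hlt
  set E1 := Complex.exp ((lam - lam⁻¹) * (t : ℂ)) with hE1
  set E2 := Complex.exp ((lamt - lamt⁻¹) * (t : ℂ)) with hE2
  set E3 := Complex.exp ((lam - lam⁻¹ + lamt - lamt⁻¹) * (t : ℂ)) with hE3
  have hE : E3 = E1 * E2 := by
    rw [hE1, hE2, hE3, ← Complex.exp_add]
    congr 1
    ring
  set g : ℤ → ℂ := fun k =>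
    (lam * lamt - 1) / (lamt - lam)
      * ((lam - lam⁻¹) * (A₁ * B₁ * lam ^ k) * E1 - (lamt - lamt⁻¹) * (A₂ * B₂ * lamt ^ k) * E2)
    - (lam - lam⁻¹ + lamt - lamt⁻¹) * (A₁ * B₂ * (lam * lamt) ^ k) * E3 with hg
  have hbase : ∀ c : ℂ, HasDerivAt (fun s : ℝ => Complex.exp (c * s)) (c * Complex.exp (c * t)) t := by
    intro c
    have h1 : HasDerivAt (fun s : ℝ => (c * s : ℂ)) c t := by
      simpa using (Complex.ofRealCLM.hasDerivAt (x := t)).const_mul c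
    simpa [mul_comm] using h1.cexp
  have hDτ : ∀ k : ℤ, HasDerivAt (fun s => τ s k) (g k) t := by
    intro k
    have hfun : (fun s : ℝ => τ s k) = fun s : ℝ =>
        A₂ * B₁
          + ((lam * lamt - 1) / (lamt - lam))
            * (A₁ * B₁ * lam ^ k * Complex.exp ((lam - lam⁻¹) * s)
              - A₂ * B₂ * lamt ^ k * Complex.exp ((lamt - lamt⁻¹) * s))
          - A₁ * B₂ * (lam * lamt) ^ k
            * Complex.exp ((lam - lam⁻¹ + lamt - lamt⁻¹) * s) := funext fun s => hτ s k
    rw [hfun]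
    have h := ((hasDerivAt_const t (A₂ * B₁)).add
        ((((hbase (lam - lam⁻¹)).const_mul (A₁ * B₁ * lam ^ k)).sub
          ((hbase (lamt - lamt⁻¹)).const_mul (A₂ * B₂ * lamt ^ k))).const_mul
            ((lam * lamt - 1) / (lamt - lam)))).sub
        ((hbase (lam - lam⁻¹ + lamt - lamt⁻¹)).const_mul (A₁ * B₂ * (lam * lamt) ^ k))
    refine h.congr_deriv ?_
    simp only [hg, hE1, hE2, hE3]
    ring
  have hb : ∀ k : ℤ, g k * τ t (k + 1) - τ t k * g (k + 1)
      = -(τ t (k - 1) * τ t (k + 2)) + τ t k * τ t (k + 1) := by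
    intro k
    set SS : ℕ → ℂ := fun i => lam * lamt * (lamt - lam) * (A₂ * B₁)
        + lam * lamt * (lam * lamt - 1) * ((A₁ * B₁) * lam ^ (k - 1) * lam ^ i * E1
            - (A₂ * B₂) * lamt ^ (k - 1) * lamt ^ i * E2)
        - lam * lamt * (lamt - lam) * (A₁ * B₂) * (lam ^ (k - 1) * lamt ^ (k - 1))
            * (lam * lamt) ^ i * (E1 * E2) with hSS
    set HH : ℕ → ℂ := fun i => (lam * lamt - 1) * ((lam ^ 2 - 1) * lamt * ((A₁ * B₁) * lam ^ (k - 1) * lam ^ i) * E1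
            - (lamt ^ 2 - 1) * lam * ((A₂ * B₂) * lamt ^ (k - 1) * lamt ^ i) * E2)
        - (lamt - lam) * ((lam ^ 2 - 1) * lamt + (lamt ^ 2 - 1) * lam)
            * ((A₁ * B₂) * lam ^ (k - 1) * lamt ^ (k - 1) * (lam * lamt) ^ i) * (E1 * E2) with hHH
    have key := polybil lam lamt A₁ A₂ B₁ B₂ E1 E2 (lam ^ (k - 1)) (lamt ^ (k - 1)) SS HH
        (fun i => by simp only [hSS]) (fun i => by simp only [hHH])
    have cS0 : lam * lamt * (lamt - lam) * τ t (k - 1) = SS 0 := by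
      rw [hτ, hSS]
      rw [← hE1, ← hE2, ← hE3, hE]
      simp only [zpow_sub₀ hlam, zpow_sub₀ hlamt, mul_zpow, zpow_one]
      field_simp
    have cS1 : lam * lamt * (lamt - lam) * τ t k = SS 1 := by
      rw [hτ, hSS]
      rw [← hE1, ← hE2, ← hE3, hE]
      simp only [zpow_sub₀ hlam, zpow_sub₀ hlamt, mul_zpow, zpow_one]
      field_simp
    have cS2 : lam * lamt * (lamt - lam) * τ t (k + 1) = SS 2 := by
      rw [hτ, hSS]
      rw [← hE1, ← hE2, ← hE3, hE]
      simp only [zpow_sub₀ hlam, zpow_sub₀ hlamt, zpow_add₀ hlam, zpow_add₀ hlamt, mul_zpow,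
        zpow_one]
      field_simp
    have cS3 : lam * lamt * (lamt - lam) * τ t (k + 2) = SS 3 := by
      rw [hτ, hSS]
      rw [← hE1, ← hE2, ← hE3, hE]
      simp only [zpow_sub₀ hlam, zpow_sub₀ hlamt, zpow_add₀ hlam, zpow_add₀ hlamt, mul_zpow,
        zpow_one, zpow_two]
      field_simp
    have cH1 : lam * lamt * (lamt - lam) * g k = HH 1 := by
      rw [hg, hHH]
      rw [hE]
      simp only [zpow_sub₀ hlam, zpow_sub₀ hlamt, mul_zpow, zpow_one]
      field_simp
      ring
    have cH2 : lam * lamt * (lamt - lam) * g (k + 1) = HH 2 := by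
      rw [hg, hHH]
      rw [hE]
      simp only [zpow_sub₀ hlam, zpow_sub₀ hlamt, zpow_add₀ hlam, zpow_add₀ hlamt, mul_zpow,
        zpow_one]
      field_simp
      ring
    refine mul_left_cancel₀ (mul_ne_zero hc hc) ?_
    calc (lam * lamt * (lamt - lam)) * (lam * lamt * (lamt - lam))
            * (g k * τ t (k + 1) - τ t k * g (k + 1))
        = (lam * lamt * (lamt - lam) * g k) * (lam * lamt * (lamt - lam) * τ t (k + 1))
          - (lam * lamt * (lamt - lam) * τ t k) * (lam * lamt * (lamt - lam) * g (k + 1)) := by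
          ring
      _ = HH 1 * SS 2 - SS 1 * HH 2 := by rw [cH1, cS2, cS1, cH2]
      _ = -(SS 0 * SS 3) + SS 1 * SS 2 := key
      _ = -((lam * lamt * (lamt - lam) * τ t (k - 1)) * (lam * lamt * (lamt - lam) * τ t (k + 2)))
          + (lam * lamt * (lamt - lam) * τ t k) * (lam * lamt * (lamt - lam) * τ t (k + 1)) := by
          rw [cS0, cS3, cS1, cS2]
      _ = (lam * lamt * (lamt - lam)) * (lam * lamt * (lamt - lam))
            * (-(τ t (k - 1) * τ t (k + 2)) + τ t k * τ t (k + 1)) := by ring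
  -- assemble
  have hfunV : (fun s : ℝ => V s j)
      = fun s : ℝ => τ s (j - 1) * τ s (j + 2) / (τ s j * τ s (j + 1)) :=
    funext fun s => hV s j
  rw [hfunV]
  have hden : τ t j * τ t (j + 1) ≠ 0 := mul_ne_zero (hτne t j) (hτne t (j + 1))
  have hD := ((hDτ (j - 1)).mul (hDτ (j + 2))).div ((hDτ j).mul (hDτ (j + 1))) hden
  refine hD.congr_deriv ?_
  simp only [Pi.mul_apply]
  have hb1 := hb (j + 1)
  rw [show j + 1 + 1 = j + 2 by ring, show j + 1 - 1 = j by ring,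
    show j + 1 + 2 = j + 3 by ring] at hb1
  have hb2 := hb (j - 1)
  rw [show j - 1 + 1 = j by ring, show j - 1 - 1 = j - 2 by ring,
    show j - 1 + 2 = j + 1 by ring] at hb2
  have hkey : (g (j - 1) * τ t (j + 2) + τ t (j - 1) * g (j + 2)) * (τ t j * τ t (j + 1))
      - τ t (j - 1) * τ t (j + 2) * (g j * τ t (j + 1) + τ t j * g (j + 1))
      = τ t (j - 1) * τ t (j + 3) * (τ t j * τ t j)
        - τ t (j - 2) * τ t (j + 2) * (τ t (j + 1) * τ t (j + 1)) := by
    linear_combination (τ t (j + 1) * τ t (j + 2)) * hb2 - (τ t (j - 1) * τ t j) * hb1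
  rw [hV t j, hV t (j + 1), hV t (j - 1)]
  rw [show j + 1 - 1 = j by ring, show j + 1 + 2 = j + 3 by ring, show j + 1 + 1 = j + 2 by ring,
    show j - 1 - 1 = j - 2 by ring, show j - 1 + 2 = j + 1 by ring, show j - 1 + 1 = j by ring]
  rw [hkey]
  have h0 := hτne t j
  have h1 := hτne t (j + 1)
  have hm1 := hτne t (j - 1)
  have h2 := hτne t (j + 2)
  have h3 := hτne t (j + 3)
  have hm2 := hτne t (j - 2)
  have h1' : τ t (1 + j) ≠ 0 := by rwa [show (1 : ℤ) + j = j + 1 by ring]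
  have h2' : τ t (2 + j) ≠ 0 := by rwa [show (2 : ℤ) + j = j + 2 by ring]
  have h3' : τ t (3 + j) ≠ 0 := by rwa [show (3 : ℤ) + j = j + 3 by ring]
  have hm1' : τ t (-1 + j) ≠ 0 := by rwa [show (-1 : ℤ) + j = j - 1 by ring]
  have hm2' : τ t (-2 + j) ≠ 0 := by rwa [show (-2 : ℤ) + j = j - 2 by ring]
  field_simp
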